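/- Let p be an odd prime and suppose at least 5 of the coefficients a_1,...,a_n (n ≥ 6, counted with multiplicity) are p-adic units. Then for any integers A, B, k, the system a_1x_1^2+...+a_nx_n^2 = 2A+B+k(m-4), a_1x_1+...+a_nx_n = B+k(m-2) is solvable over ℤ_p. -/

import Mathlib

open Finset

section SystemSolvableAux

variable {p : ℕ} [Fact p.Prime]



lemma padic_toZMod_eq_zero_iff (z : ℤ_[p]) :
    PadicInt.toZMod z = 0 ↔ (p : ℤ_[p]) ∣ z := by
  rw [← RingHom.mem_ker, PadicInt.ker_toZMod, PadicInt.maximalIdeal_eq_span_p,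
    Ideal.mem_span_singleton]

lemma padic_isUnit_of_toZMod_ne_zero {z : ℤ_[p]} (h : PadicInt.toZMod z ≠ 0) : IsUnit z := by
  by_contra hu
  rw [PadicInt.not_isUnit_iff, PadicInt.norm_lt_one_iff_dvd, ← padic_toZMod_eq_zero_iff] at hu
  exact h hu

lemma exists_isotropic (b : Fin 4 → ZMod p) :
    ∃ d : Fin 4 → ZMod p, d ≠ 0 ∧ (∑ i, b i * d i = 0) ∧ (∑ i, b i * d i ^ 2 = 0) := by
  classical
  set f₁ : MvPolynomial (Fin 4) (ZMod p) :=
    ∑ i, MvPolynomial.C (b i) * MvPolynomial.X i with hf₁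
  set f₂ : MvPolynomial (Fin 4) (ZMod p) :=
    ∑ i, MvPolynomial.C (b i) * MvPolynomial.X i ^ 2 with hf₂
  have h1 : f₁.totalDegree ≤ 1 := by
    refine (MvPolynomial.totalDegree_finset_sum _ _).trans (Finset.sup_le fun i _ => ?_)
    refine (MvPolynomial.totalDegree_mul _ _).trans ?_
    simp [MvPolynomial.totalDegree_C, MvPolynomial.totalDegree_X]
  have h2 : f₂.totalDegree ≤ 2 := by
    refine (MvPolynomial.totalDegree_finset_sum _ _).trans (Finset.sup_le fun i _ => ?_)
    refine (MvPolynomial.totalDegree_mul _ _).trans ?_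
    have := (MvPolynomial.totalDegree_pow (MvPolynomial.X i : MvPolynomial (Fin 4) (ZMod p)) 2)
    simp only [MvPolynomial.totalDegree_C, MvPolynomial.totalDegree_X] at *
    omega
  have hlt : f₁.totalDegree + f₂.totalDegree < Fintype.card (Fin 4) := by
    simp only [Fintype.card_fin]; omega
  have hdvd := char_dvd_card_solutions_of_add_lt p hlt
  have heval : ∀ x : Fin 4 → ZMod p,
      (MvPolynomial.eval x f₁ = 0 ∧ MvPolynomial.eval x f₂ = 0) ↔
      ((∑ i, b i * x i = 0) ∧ (∑ i, b i * x i ^ 2 = 0)) := by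
    intro x
    simp [hf₁, hf₂]
  have hzero : (MvPolynomial.eval (0 : Fin 4 → ZMod p) f₁ = 0 ∧
      MvPolynomial.eval (0 : Fin 4 → ZMod p) f₂ = 0) := by
    rw [heval]; simp
  have hpos : 0 < Fintype.card { x : Fin 4 → ZMod p //
      MvPolynomial.eval x f₁ = 0 ∧ MvPolynomial.eval x f₂ = 0 } :=
    Fintype.card_pos_iff.mpr ⟨⟨0, hzero⟩⟩
  have hp2 : 2 ≤ p := (Fact.out : p.Prime).two_le
  have hcard : 1 < Fintype.card { x : Fin 4 → ZMod p //
      MvPolynomial.eval x f₁ = 0 ∧ MvPolynomial.eval x f₂ = 0 } := by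
    have := Nat.le_of_dvd hpos hdvd
    omega
  obtain ⟨⟨d, hd⟩, hne⟩ := Fintype.exists_ne_of_one_lt_card hcard ⟨0, hzero⟩
  refine ⟨d, ?_, ((heval d).mp hd).1, ((heval d).mp hd).2⟩
  intro h0
  exact hne (by simp [h0])




lemma sum_two_support {M : Type*} [AddCommMonoid M] {n : ℕ} {c1 c2 : Fin n} (hne : c1 ≠ c2)
    (f g : Fin n → M) :
    ∑ j, (if j = c1 then f j else if j = c2 then g j else 0) = f c1 + g c2 := by
  have h : ∀ j : Fin n, (if j = c1 then f j else if j = c2 then g j else 0)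
      = (if j = c1 then f j else 0) + (if j = c2 then g j else 0) := by
    intro j
    split_ifs with h1 h2 <;> simp_all
  rw [Finset.sum_congr rfl fun j _ => h j, Finset.sum_add_distrib,
    Finset.sum_ite_eq' univ c1 f, Finset.sum_ite_eq' univ c2 g]
  simp

lemma sum_mul_two_point {R : Type*} [CommRing R] {n : ℕ} {c1 c2 : Fin n} (hne : c1 ≠ c2)
    (f : Fin n → R) (X Y : R) :
    ∑ j, f j * (if j = c1 then X else if j = c2 then Y else 0) = f c1 * X + f c2 * Y := by
  have h : ∀ j : Fin n, f j * (if j = c1 then X else if j = c2 then Y else 0)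
      = (if j = c1 then f j * X else if j = c2 then f j * Y else 0) := by
    intro j; split_ifs <;> ring
  rw [Finset.sum_congr rfl fun j _ => h j, sum_two_support hne]

lemma exists_five_var (hp : Odd p) (α : Fin 5 → ℤ_[p]) (hα : ∀ j, IsUnit (α j))
    (S Q : ℤ_[p]) :
    ∃ w : Fin 5 → ℤ_[p], (∑ j, α j * w j = S) ∧ (∑ j, α j * w j ^ 2 = Q) := by
  classical
  have hp2 : (2 : ZMod p) ≠ 0 := by
    intro h
    have : ((2 : ℕ) : ZMod p) = 0 := by exact_mod_cast h
    rw [ZMod.natCast_eq_zero_iff] at this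
    have := (Nat.prime_dvd_prime_iff_eq (Fact.out : p.Prime) Nat.prime_two).mp this
    rw [this] at hp
    exact (by decide : ¬ Odd 2) hp
  set T : ℤ_[p] →+* ZMod p := PadicInt.toZMod with hT
  have hb : ∀ j, T (α j) ≠ 0 := by
    intro j h
    have := (padic_toZMod_eq_zero_iff (α j)).mp h
    rw [← PadicInt.norm_lt_one_iff_dvd] at this
    rw [PadicInt.isUnit_iff.mp (hα j)] at this
    exact absurd this (by norm_num)
  obtain ⟨e, he0, heL, heQ⟩ := exists_isotropic (fun i : Fin 4 => T (α i.castSucc))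
  obtain ⟨i0, hi0⟩ := Function.ne_iff.mp he0
  simp only [Pi.zero_apply] at hi0
  -- integer lifts of e
  set D : Fin 4 → ℤ_[p] := fun i => ((e i).val : ℤ_[p]) with hD
  have hTD : ∀ i, T (D i) = e i := by
    intro i
    rw [hD]
    simp only [map_natCast]
    exact ZMod.natCast_zmod_val _
  set r : ℤ_[p] := ∑ i : Fin 4, α i.castSucc * D i with hr
  have hTr : T r = 0 := by
    rw [hr, map_sum]
    simp only [map_mul, hTD]
    exact heL
  obtain ⟨v4, hv4⟩ := (hα (Fin.last 4)).exists_right_inv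
  set d5 : ℤ_[p] := -r * v4 with hd5def
  have hd5 : α (Fin.last 4) * d5 = -r := by
    rw [hd5def]; linear_combination (-r) * hv4
  have hTd5 : T d5 = 0 := by
    have : T (α (Fin.last 4)) * T d5 = 0 := by
      rw [← map_mul, hd5, map_neg, hTr, neg_zero]
    exact (mul_eq_zero.mp this).resolve_left (hb _)
  set d : Fin 5 → ℤ_[p] := Fin.snoc D d5 with hd
  have hdcs : ∀ i : Fin 4, d i.castSucc = D i := fun i => by rw [hd]; simp
  have hdlast : d (Fin.last 4) = d5 := by rw [hd, Fin.snoc_last]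
  have hdL : ∑ j, α j * d j = 0 := by
    rw [Fin.sum_univ_castSucc]
    simp only [hdcs, hdlast]
    rw [← hr, hd5]
    ring
  set qd : ℤ_[p] := ∑ j, α j * d j ^ 2 with hqd
  have hTqd : T qd = 0 := by
    rw [hqd, Fin.sum_univ_castSucc, map_add, map_sum]
    simp only [map_mul, map_pow, hdcs, hdlast, hTD, hTd5]
    rw [heQ]
    ring
  -- the base point
  have hc12 : i0.castSucc ≠ Fin.last 4 := Fin.ne_last_of_lt (Fin.castSucc_lt_last i0)
  have hΔu : IsUnit (α i0.castSucc * α (Fin.last 4) * (d5 - D i0)) := by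
    apply padic_isUnit_of_toZMod_ne_zero
    simp only [map_mul, map_sub, hTD, hTd5]
    exact mul_ne_zero (mul_ne_zero (hb _) (hb _)) (by rw [show PadicInt.toZMod d5 = T d5 from rfl, show PadicInt.toZMod (D i0) = T (D i0) from rfl, hTD, hTd5]; simpa using neg_ne_zero.mpr hi0)
  obtain ⟨Δi, hinv⟩ := hΔu.exists_right_inv
  set base : Fin 5 → ℤ_[p] := fun j =>
    if j = i0.castSucc then α (Fin.last 4) * (S * d5 - 1) * Δi
    else if j = Fin.last 4 then α i0.castSucc * (1 - D i0 * S) * Δi else 0 with hbase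
  have hbaseL : ∑ j, α j * base j = S := by
    simp only [hbase]
    rw [sum_mul_two_point hc12]
    linear_combination S * hinv
  have hbaseB : ∑ j, α j * d j * base j = 1 := by
    simp only [hbase]
    rw [sum_mul_two_point hc12 (fun j => α j * d j)]
    simp only [hdcs, hdlast]
    linear_combination hinv
  set q1 : ℤ_[p] := ∑ j, α j * base j ^ 2 with hq1
  -- Hensel
  have h2u : IsUnit (2 : ℤ_[p]) := by
    apply padic_isUnit_of_toZMod_ne_zero
    rw [show ((2 : ℤ_[p])) = ((2 : ℕ) : ℤ_[p]) by norm_num, map_natCast]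
    exact_mod_cast hp2
  obtain ⟨i2, h2inv⟩ := h2u.exists_right_inv
  set t0 : ℤ_[p] := (Q - q1) * i2 with ht0
  set F : Polynomial ℤ_[p] :=
    Polynomial.C qd * Polynomial.X ^ 2 + Polynomial.C 2 * Polynomial.X
      + Polynomial.C (q1 - Q) with hF
  have hFeval : ∀ z : ℤ_[p], F.eval z = qd * z ^ 2 + 2 * z + (q1 - Q) := by
    intro z; rw [hF]; simp
  have hFt0 : F.eval t0 = qd * t0 ^ 2 := by
    rw [hFeval, ht0]
    linear_combination (Q - q1) * h2inv
  have hFder : ∀ z : ℤ_[p], (Polynomial.derivative F).eval z = 2 * qd * z + 2 := by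
    intro z; rw [hF]; simp; ring
  have hnorm : ‖F.eval t0‖ < ‖(Polynomial.derivative F).eval t0‖ ^ 2 := by
    have hder1 : ‖(Polynomial.derivative F).eval t0‖ = 1 := by
      rw [hFder]
      apply PadicInt.isUnit_iff.mp
      apply padic_isUnit_of_toZMod_ne_zero
      have h2' : T (2 * qd * t0 + 2) = 2 := by
        rw [map_add, map_mul, map_mul, hTqd]
        rw [show T 2 = 2 by
          rw [show ((2 : ℤ_[p])) = ((2 : ℕ) : ℤ_[p]) by norm_num, map_natCast]; norm_num]
        ring
      rw [h2']; exact hp2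
    have hqdlt : ‖qd‖ < 1 := by
      rw [PadicInt.norm_lt_one_iff_dvd, ← padic_toZMod_eq_zero_iff]
      exact hTqd
    rw [hder1, one_pow, hFt0]
    calc ‖qd * t0 ^ 2‖ = ‖qd‖ * ‖t0 ^ 2‖ := norm_mul _ _
    _ ≤ ‖qd‖ * 1 := mul_le_mul_of_nonneg_left (PadicInt.norm_le_one _) (norm_nonneg _)
    _ = ‖qd‖ := mul_one _
    _ < 1 := hqdlt
  obtain ⟨t, htF, -⟩ := hensels_lemma hnorm
  have hroot : qd * t ^ 2 + 2 * t + (q1 - Q) = 0 := by rw [← hFeval]; exact htF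
  refine ⟨fun j => base j + t * d j, ?_, ?_⟩
  · have expand : ∑ j, α j * (base j + t * d j)
        = (∑ j, α j * base j) + t * ∑ j, α j * d j := by
      rw [Finset.mul_sum, ← Finset.sum_add_distrib]
      exact Finset.sum_congr rfl fun j _ => by ring
    rw [expand, hbaseL, hdL]; ring
  · have expand : ∑ j, α j * (base j + t * d j) ^ 2
        = (∑ j, α j * base j ^ 2) + 2 * t * (∑ j, α j * d j * base j)
          + t ^ 2 * ∑ j, α j * d j ^ 2 := by
      rw [Finset.mul_sum, Finset.mul_sum, ← Finset.sum_add_distrib, ← Finset.sum_add_distrib]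
      exact Finset.sum_congr rfl fun j _ => by ring
    rw [expand, hbaseB, ← hq1, ← hqd]
    linear_combination hroot


end SystemSolvableAux


open Finset in
/-- If `p` is an odd prime and at least `5` of the coefficients `a₁,…,aₙ`
(`n ≥ 6`, counted with multiplicity) are `p`-adic units, then for all integers
`A, B, k` the system `Σ aᵢxᵢ² = 2A+B+k(m-4)`, `Σ aᵢxᵢ = B+k(m-2)` is solvable
over `ℤ_[p]`. -/

theorem system_solvable_many_units (p : ℕ) [Fact p.Prime] (hp : Odd p)
    (m : ℤ) (hm : 3 ≤ m) (n : ℕ) (hn : 6 ≤ n) (a : Fin n → ℤ)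
    (ha : ∀ i, 0 < a i)
    (hunits : 5 ≤ (univ.filter fun i => ¬ (p : ℤ) ∣ a i).card)
    (A B k : ℤ) :
    ∃ x : Fin n → ℤ_[p],
      (∑ i, (a i : ℤ_[p]) * (x i) ^ 2 =
        ((2 * A + B + k * (m - 4) : ℤ) : ℤ_[p])) ∧
      (∑ i, (a i : ℤ_[p]) * x i = ((B + k * (m - 2) : ℤ) : ℤ_[p])) := by
  classical
  obtain ⟨s, hs_sub, hs_card⟩ := Finset.exists_subset_card_eq hunits
  set ι : Fin 5 → Fin n := fun j => ((s.orderIsoOfFin hs_card) j : Fin n) with hι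
  have hιinj : Function.Injective ι := by
    intro j1 j2 h
    exact (s.orderIsoOfFin hs_card).injective (Subtype.coe_injective h)
  have hιmem : ∀ j, ¬ (p : ℤ) ∣ a (ι j) := by
    intro j
    have : ι j ∈ s := ((s.orderIsoOfFin hs_card) j).2
    have := hs_sub this
    exact (Finset.mem_filter.mp this).2
  set α : Fin 5 → ℤ_[p] := fun j => ((a (ι j) : ℤ) : ℤ_[p]) with hα
  have hαu : ∀ j, IsUnit (α j) := by
    intro j
    apply padic_isUnit_of_toZMod_ne_zero
    rw [hα]
    have : (PadicInt.toZMod (((a (ι j) : ℤ) : ℤ_[p]))) = ((a (ι j) : ℤ) : ZMod p) :=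
      map_intCast _ _
    rw [this]
    rw [Ne, ZMod.intCast_zmod_eq_zero_iff_dvd]
    exact hιmem j
  obtain ⟨w, hwL, hwQ⟩ := exists_five_var hp α hαu
    ((B + k * (m - 2) : ℤ) : ℤ_[p]) ((2 * A + B + k * (m - 4) : ℤ) : ℤ_[p])
  set x : Fin n → ℤ_[p] := fun l => if h : ∃ j, ι j = l then w h.choose else 0 with hx
  have hx1 : ∀ j, x (ι j) = w j := by
    intro j
    have hex : ∃ j', ι j' = ι j := ⟨j, rfl⟩
    show (if h : ∃ j', ι j' = ι j then w h.choose else 0) = w j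
    rw [dif_pos hex]
    congr 1
    exact hιinj hex.choose_spec
  have hx0 : ∀ l, l ∉ Finset.image ι univ → x l = 0 := by
    intro l hl
    show (if h : ∃ j, ι j = l then w h.choose else 0) = 0
    rw [dif_neg]
    intro ⟨j, hj⟩
    exact hl (Finset.mem_image.mpr ⟨j, Finset.mem_univ j, hj⟩)
  have key : ∀ f : Fin n → ℤ_[p] → ℤ_[p], (∀ l, f l 0 = 0) →
      ∑ l, f l (x l) = ∑ j, f (ι j) (w j) := by
    intro f hf0
    rw [← Finset.sum_subset (Finset.subset_univ (Finset.image ι univ))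
      (fun l _ hl => by rw [hx0 l hl, hf0])]
    rw [Finset.sum_image (fun j1 _ j2 _ h => hιinj h)]
    exact Finset.sum_congr rfl fun j _ => by rw [hx1 j]
  refine ⟨x, ?_, ?_⟩
  · rw [key (fun l z => (a l : ℤ_[p]) * z ^ 2) (fun l => by ring)]
    exact hwQ
  · rw [key (fun l z => (a l : ℤ_[p]) * z) (fun l => by ring)]
    exact hwL
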